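/- Let P : ℕ → ℕ → ℝ be such that for every t ≥ 1, n_t·P_t(m̂) = ( n_{t−1} − m·m̂·α·n_{t−1}/e_{t−1} − m·(1 − α) )·P_{t−1}(m̂) + 1, and for every integer k > m̂ and every t ≥ 1, n_t·P_t(k) = ( n_{t−1} − m·α·k·n_{t−1}/e_{t−1} − m·(1 − α) )·P_{t−1}(k) + ( m·α·(k − 1)·n_{t−1}/e_{t−1} + m·(1 − α) )·P_{t−1}(k − 1). Then for every integer k ≥ m̂, the limit lim_{t→∞} P_t(k) exists. -/

import Mathlib

open Filter Finset

/-- General convergence lemma for recurrences `(N+t+1) x_{t+1} = (N+t-a_{t+1}) x_t + g_{t+1}`. -/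
lemma key_limit (N : ℝ) (hN : 1 ≤ N) (a g x : ℕ → ℝ) (c b : ℝ)
    (ha0 : ∀ t, 0 ≤ a t) (ha : Tendsto a atTop (nhds c))
    (hg : Tendsto g atTop (nhds b))
    (hrec : ∀ t : ℕ, (N + (t : ℝ) + 1) * x (t + 1) = (N + (t : ℝ) - a (t + 1)) * x t + g (t + 1)) :
    Tendsto x atTop (nhds (b / (1 + c))) := by
  have hc0 : 0 ≤ c := ge_of_tendsto' ha ha0
  have h1c : (0 : ℝ) < 1 + c := by linarith
  set L := b / (1 + c) with hL
  have hLb : (1 + c) * L = b := by have := h1c.ne'; rw [hL]; field_simp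
  set ε : ℕ → ℝ := fun t => g t - (1 + a t) * L with hε_def
  have hε : Tendsto ε atTop (nhds 0) := by
    have h := hg.sub ((ha.const_add 1).mul_const L)
    have : b - (1 + c) * L = 0 := by rw [hLb]; ring
    rwa [this] at h
  have hrecy : ∀ t : ℕ, (N + (t : ℝ) + 1) * (x (t + 1) - L)
      = (N + (t : ℝ) - a (t + 1)) * (x t - L) + ε (t + 1) := by
    intro t
    simp only [hε_def]
    linear_combination hrec t
  -- choose T0 with a (t+1) ≤ N + t for t ≥ T0
  have hev : ∀ᶠ t : ℕ in atTop, a (t + 1) ≤ N + t := by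
    have h1 : ∀ᶠ t : ℕ in atTop, a (t + 1) ≤ c + 1 :=
      (ha.comp (tendsto_add_atTop_nat 1)).eventually (eventually_le_nhds (lt_add_one c))
    have h2 : ∀ᶠ t : ℕ in atTop, c + 1 ≤ N + t := by
      filter_upwards [eventually_ge_atTop ⌈c + 1⌉₊] with t ht
      have h3 : c + 1 ≤ (⌈c + 1⌉₊ : ℝ) := Nat.le_ceil _
      have h4 : ((⌈c + 1⌉₊ : ℕ) : ℝ) ≤ (t : ℝ) := Nat.cast_le.2 ht
      linarith
    filter_upwards [h1, h2] with t h1 h2 using h1.trans h2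
  obtain ⟨T0, hT0⟩ := eventually_atTop.1 hev
  set C := (N + (T0 : ℝ)) * |x T0 - L| with hC
  have main : ∀ t, T0 ≤ t →
      (N + (t : ℝ)) * |x t - L| ≤ C + ∑ s ∈ Finset.Ico T0 t, |ε (s + 1)| := by
    intro t ht
    induction t, ht using Nat.le_induction with
    | base => simp [hC]
    | succ t ht IH =>
      have h0 : 0 ≤ a (t + 1) := ha0 _
      have h1 : a (t + 1) ≤ N + t := hT0 t ht
      have htn : (0 : ℝ) ≤ N + t := by positivity
      have habs : |(N + (t : ℝ) - a (t + 1)) * (x t - L)| ≤ (N + (t : ℝ)) * |x t - L| := by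
        rw [abs_mul]
        apply mul_le_mul_of_nonneg_right _ (abs_nonneg _)
        rw [abs_of_nonneg (by linarith)]
        linarith
      have hpos : (0 : ℝ) ≤ N + (t : ℝ) + 1 := by positivity
      have step1 : (N + ((t : ℝ) + 1)) * |x (t + 1) - L|
          = |(N + (t : ℝ) - a (t + 1)) * (x t - L) + ε (t + 1)| := by
        rw [← hrecy t, abs_mul, abs_of_nonneg hpos]; ring_nf
      calc (N + ((t + 1 : ℕ) : ℝ)) * |x (t + 1) - L|
          = |(N + (t : ℝ) - a (t + 1)) * (x t - L) + ε (t + 1)| := by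
            push_cast; rw [← step1]
        _ ≤ (N + (t : ℝ)) * |x t - L| + |ε (t + 1)| := by
            refine (abs_add_le _ _).trans ?_
            exact add_le_add_left habs _
        _ ≤ (C + ∑ s ∈ Finset.Ico T0 t, |ε (s + 1)|) + |ε (t + 1)| :=
            add_le_add_left IH _
        _ = C + ∑ s ∈ Finset.Ico T0 (t + 1), |ε (s + 1)| := by
            rw [Finset.sum_Ico_succ_top ht]; ring
  -- bound via range sums
  set S : ℕ → ℝ := fun t => ∑ s ∈ Finset.range t, |ε (s + 1)| with hS_def
  have hbound : ∀ t, T0 ≤ t → |x t - L| ≤ (C + S t) / (N + t) := by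
    intro t ht
    have h1 := main t ht
    have h2 : ∑ s ∈ Finset.Ico T0 t, |ε (s + 1)| ≤ S t := by
      apply Finset.sum_le_sum_of_subset_of_nonneg
      · intro s hs
        simp only [Finset.mem_Ico] at hs
        exact Finset.mem_range.2 hs.2
      · intro s _ _; exact abs_nonneg _
    have hpos' : (0 : ℝ) < N + t := by positivity
    rw [le_div_iff₀ hpos']
    calc |x t - L| * (N + t) = (N + (t : ℝ)) * |x t - L| := by ring
      _ ≤ C + ∑ s ∈ Finset.Ico T0 t, |ε (s + 1)| := h1
      _ ≤ C + S t := by linarith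
  -- the bound tends to 0
  have hSt : Tendsto (fun t : ℕ => S t / t) atTop (nhds 0) := by
    have h1 : Tendsto (fun s : ℕ => |ε (s + 1)|) atTop (nhds 0) := by
      have := (hε.comp (tendsto_add_atTop_nat 1)).abs
      simpa using this
    have h2 := h1.cesaro
    apply h2.congr
    intro n
    rw [hS_def, div_eq_inv_mul]
  have hA : Tendsto (fun t : ℕ => C / t + S t / t) atTop (nhds 0) := by
    have := (tendsto_const_div_atTop_nhds_zero_nat C).add hSt
    simpa using this
  have hB : Tendsto (fun t : ℕ => (t : ℝ) / (N + t)) atTop (nhds 1) := by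
    have h0 : Tendsto (fun t : ℕ => N / (N + t)) atTop (nhds 0) := by
      apply squeeze_zero' (f := fun t : ℕ => N / (N + t)) (g := fun t : ℕ => N / t)
      · filter_upwards with t
        positivity
      · filter_upwards [eventually_ge_atTop 1] with t ht
        have hpos : (0 : ℝ) < (t : ℝ) := by exact_mod_cast ht
        apply div_le_div_of_nonneg_left (by linarith) hpos (by linarith)
      · exact tendsto_const_div_atTop_nhds_zero_nat N
    have h1 : Tendsto (fun t : ℕ => 1 - N / (N + t)) atTop (nhds 1) := by
      have := (tendsto_const_nhds (x := (1:ℝ)) (f := atTop (α := ℕ))).sub h0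
      simpa using this
    apply h1.congr'
    filter_upwards [eventually_ge_atTop 1] with t ht
    have hpos : (0 : ℝ) < N + t := by positivity
    field_simp; ring
  have hF : Tendsto (fun t : ℕ => (C + S t) / (N + t)) atTop (nhds 0) := by
    have := hA.mul hB
    rw [zero_mul] at this
    apply this.congr'
    filter_upwards [eventually_ge_atTop 1] with t ht
    have ht0 : (0 : ℝ) < (t : ℝ) := by exact_mod_cast ht
    have hpos : (0 : ℝ) < N + t := by positivity
    field_simp
  have hy : Tendsto (fun t : ℕ => |x t - L|) atTop (nhds 0) := by
    apply squeeze_zero' (Eventually.of_forall fun t => abs_nonneg _) _ hF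
    filter_upwards [eventually_ge_atTop T0] with t ht using hbound t ht
  have : Tendsto (fun t : ℕ => x t - L) atTop (nhds 0) :=
    (tendsto_zero_iff_abs_tendsto_zero _).2 hy
  have h := this.add_const L
  simpa using h

lemma ratio_tendsto (n0 e0 M : ℕ) (hM : 1 ≤ M) :
    Tendsto (fun t : ℕ => ((n0 + t : ℕ) : ℝ) / ((e0 + M * t : ℕ) : ℝ)) atTop
      (nhds (1 / M)) := by
  have hM0 : (0 : ℝ) < M := by exact_mod_cast hM
  have h1 : Tendsto (fun t : ℕ => (n0 : ℝ) / t + 1) atTop (nhds 1) := by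
    have := (tendsto_const_div_atTop_nhds_zero_nat (n0 : ℝ)).add_const 1
    simpa using this
  have h2 : Tendsto (fun t : ℕ => (e0 : ℝ) / t + M) atTop (nhds M) := by
    have := (tendsto_const_div_atTop_nhds_zero_nat (e0 : ℝ)).add_const (M : ℝ)
    simpa using this
  have h := h1.div h2 (by positivity)
  apply h.congr'
  filter_upwards [eventually_ge_atTop 1] with t ht
  have ht0 : (0 : ℝ) < (t : ℝ) := by exact_mod_cast ht
  push_cast
  simp only [Pi.div_apply]
  have ht' : (t : ℝ) ≠ 0 := ne_of_gt ht0
  have hden : (e0 : ℝ) + M * t ≠ 0 := by positivity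
  field_simp

/-- With `n_t = n_0 + t` and `e_t = e_0 + (m + m̂)·t`, if
`P : ℕ → ℕ → ℝ` satisfies the base recurrence at in-degree `m̂` and the step
recurrence at every in-degree `k > m̂`, then `lim_{t→∞} P_t(k)` exists for every
`k ≥ m̂`. -/
theorem indegree_distribution_limit_exists
    (m mh : ℕ) (hm : 1 ≤ m)
    (α : ℝ) (hα : α ∈ Set.Icc (0 : ℝ) 1)
    (n0 e0 : ℕ) (hn0 : 1 ≤ n0) (he0 : 1 ≤ e0)
    (P : ℕ → ℕ → ℝ)
    (hbase : ∀ t : ℕ, 1 ≤ t →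
      ((n0 + t : ℕ) : ℝ) * P t mh =
        (((n0 + (t - 1) : ℕ) : ℝ)
            - (m : ℝ) * (mh : ℝ) * α * ((n0 + (t - 1) : ℕ) : ℝ)
                / ((e0 + (m + mh) * (t - 1) : ℕ) : ℝ)
            - (m : ℝ) * (1 - α)) * P (t - 1) mh + 1)
    (hstep : ∀ k : ℕ, mh < k → ∀ t : ℕ, 1 ≤ t →
      ((n0 + t : ℕ) : ℝ) * P t k =
        (((n0 + (t - 1) : ℕ) : ℝ)
            - (m : ℝ) * α * (k : ℝ) * ((n0 + (t - 1) : ℕ) : ℝ)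
                / ((e0 + (m + mh) * (t - 1) : ℕ) : ℝ)
            - (m : ℝ) * (1 - α)) * P (t - 1) k
        + ((m : ℝ) * α * ((k : ℝ) - 1) * ((n0 + (t - 1) : ℕ) : ℝ)
              / ((e0 + (m + mh) * (t - 1) : ℕ) : ℝ)
            + (m : ℝ) * (1 - α)) * P (t - 1) (k - 1)) :
    ∀ k : ℕ, mh ≤ k → ∃ L : ℝ, Tendsto (fun t : ℕ => P t k) atTop (nhds L) := by
  obtain ⟨hα0, hα1⟩ := hα
  have hN : (1 : ℝ) ≤ (n0 : ℝ) := by exact_mod_cast hn0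
  set M := m + mh with hM_def
  have hM : 1 ≤ M := le_trans hm (Nat.le_add_right m mh)
  set r : ℕ → ℝ := fun s => ((n0 + s : ℕ) : ℝ) / ((e0 + M * s : ℕ) : ℝ) with hr_def
  have hr : Tendsto r atTop (nhds (1 / M)) := ratio_tendsto n0 e0 M hM
  have hr' : Tendsto (fun s : ℕ => r (s - 1)) atTop (nhds (1 / M)) :=
    hr.comp (tendsto_sub_atTop_nat 1)
  have hr0 : ∀ s, 0 ≤ r s := fun s => div_nonneg (Nat.cast_nonneg _) (Nat.cast_nonneg _)
  intro k hk
  induction k, hk using Nat.le_induction with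
  | base =>
    refine ⟨1 / (1 + ((m : ℝ) * mh * α * (1 / M) + m * (1 - α))),
      key_limit (n0 : ℝ) hN
        (fun s => (m : ℝ) * mh * α * r (s - 1) + m * (1 - α))
        (fun _ => 1) (fun t => P t mh) _ 1 ?_ ?_ tendsto_const_nhds ?_⟩
    · intro s
      have h1 : (0 : ℝ) ≤ (m : ℝ) * mh * α * r (s - 1) := by
        have := hr0 (s - 1)
        positivity
      have h2 : (0 : ℝ) ≤ (m : ℝ) * (1 - α) :=
        mul_nonneg (by positivity) (by linarith)
      show (0 : ℝ) ≤ (m : ℝ) * mh * α * r (s - 1) + m * (1 - α)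
      linarith
    · exact ((hr'.const_mul _).add_const _)
    · intro t
      have h := hbase (t + 1) (by omega)
      simp only [Nat.add_sub_cancel] at h
      push_cast at h ⊢
      simp only [hr_def]
      push_cast
      linear_combination h
  | succ k hk IH =>
    obtain ⟨Lk, hLk⟩ := IH
    have hLk' : Tendsto (fun s : ℕ => P (s - 1) k) atTop (nhds Lk) :=
      hLk.comp (tendsto_sub_atTop_nat 1)
    refine ⟨_, key_limit (n0 : ℝ) hN
        (fun s => (m : ℝ) * α * ((k : ℝ) + 1) * r (s - 1) + m * (1 - α))
        (fun s => ((m : ℝ) * α * (((k : ℝ) + 1) - 1) * r (s - 1) + m * (1 - α)) * P (s - 1) k)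
        (fun t => P t (k + 1))
        ((m : ℝ) * α * ((k : ℝ) + 1) * (1 / M) + m * (1 - α))
        (((m : ℝ) * α * (((k : ℝ) + 1) - 1) * (1 / M) + m * (1 - α)) * Lk) ?_ ?_ ?_ ?_⟩
    · intro s
      have h1 : (0 : ℝ) ≤ (m : ℝ) * α * ((k : ℝ) + 1) * r (s - 1) := by
        have := hr0 (s - 1)
        positivity
      have h2 : (0 : ℝ) ≤ (m : ℝ) * (1 - α) :=
        mul_nonneg (by positivity) (by linarith)
      show (0 : ℝ) ≤ (m : ℝ) * α * ((k : ℝ) + 1) * r (s - 1) + m * (1 - α)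
      linarith
    · exact ((hr'.const_mul _).add_const _)
    · exact (((hr'.const_mul _).add_const _).mul hLk')
    · intro t
      have h := hstep (k + 1) (by omega) (t + 1) (by omega)
      simp only [Nat.add_sub_cancel] at h
      push_cast at h ⊢
      simp only [hr_def]
      push_cast
      linear_combination h
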